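/- For every integer a ≥ 1, the alternating sum ∑_{t=0}^{a} (-1)^t π^{binom(t,2)} q^{t(a-1)} [[a;t]] equals 0. -/

import Mathlib

/- The ring `Aq = ℚ(q)[π]/(π²-1) ≅ ℚ(q) × ℚ(q)` (via π ↦ (1, -1), an isomorphism
since 2 is invertible).  Division/inversion is componentwise (the total fraction ring). -/
noncomputable section

abbrev Aq : Type := RatFunc ℚ × RatFunc ℚ

/-- the element `q` -/
def qA : Aq := (RatFunc.X, RatFunc.X)

/-- the element `π`, satisfying `π² = 1` -/
def pA : Aq := (1, -1)

/-- The `(q,π)`-binomial coefficient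
`[[a;t]] = (∏_{s=0}^{t-1} ((πq)^{a-s} - q^{s-a})) / (∏_{s=1}^{t} ((πq)^s - q^{-s}))`. -/
def qbinom (a : ℤ) (t : ℕ) : Aq :=
  (∏ s ∈ Finset.range t, ((pA * qA) ^ (a - (s : ℤ)) - qA ^ ((s : ℤ) - a))) /
  (∏ s ∈ Finset.range t, ((pA * qA) ^ ((s : ℤ) + 1) - qA ^ (-((s : ℤ) + 1))))

section AuxFieldLemma
variable {K : Type*} [Field K]

private lemma qb_core (p q : K) (hp : p ≠ 0) (hq : q ≠ 0) (a : ℤ) (t : ℕ) :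
    q ^ (((t:ℤ)+1)*(a-1)) * ((p*q)^a - q^(-a))
      = p^(t+1) * q^(a*((t:ℤ)+1)) * ((p*q)^(a-((t:ℤ)+1)) - q^(((t:ℤ)+1)-a))
        + q^(a*(t:ℤ)) * ((p*q)^((t:ℤ)+1) - q^(-((t:ℤ)+1))) := by
  have hpq : p*q ≠ 0 := mul_ne_zero hp hq
  have h1 : ((t:ℤ)+1) = ((t+1 : ℕ) : ℤ) := by push_cast; ring
  have hqa : q ^ a ≠ 0 := zpow_ne_zero _ hq
  have hpqa : (p*q) ^ a ≠ 0 := zpow_ne_zero _ hpq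
  rw [h1, mul_comm ((t+1:ℕ):ℤ) (a-1)]
  rw [zpow_mul q (a-1) ((t+1:ℕ):ℤ), zpow_mul q a ((t+1:ℕ):ℤ), zpow_mul q a (t:ℤ),
      zpow_natCast, zpow_natCast, zpow_natCast,
      zpow_sub₀ hq a 1, zpow_one, zpow_sub₀ hpq, zpow_sub₀ hq, zpow_neg, zpow_neg,
      zpow_natCast, zpow_natCast]
  field_simp
  rw [div_pow]
  field_simp
  ring

private lemma qb_key (p q : K) (hp : p ≠ 0) (hq : q ≠ 0)
    (hD : ∀ s : ℕ, (p*q) ^ ((s:ℤ)+1) - q ^ (-((s:ℤ)+1)) ≠ 0)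
    (a : ℕ) (ha : 1 ≤ a) :
    ∑ t ∈ Finset.range (a+1), (-1:K)^t * p ^ t.choose 2 * q ^ ((t:ℤ) * ((a:ℤ)-1)) *
      ((∏ s ∈ Finset.range t, ((p*q) ^ ((a:ℤ) - (s:ℤ)) - q ^ ((s:ℤ) - (a:ℤ)))) /
       (∏ s ∈ Finset.range t, ((p*q) ^ ((s:ℤ)+1) - q ^ (-((s:ℤ)+1))))) = 0 := by
  set N : ℤ → ℕ → K := fun b t => ∏ s ∈ Finset.range t, ((p*q) ^ (b - (s:ℤ)) - q ^ ((s:ℤ) - b)) with hNdef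
  set D : ℕ → K := fun t => ∏ s ∈ Finset.range t, ((p*q) ^ ((s:ℤ)+1) - q ^ (-((s:ℤ)+1))) with hDdef
  have hDt : ∀ t, D t ≠ 0 := fun t =>
    Finset.prod_ne_zero_iff.mpr fun s _ => hD s
  set v : ℕ → K := fun t => (-1:K)^t * p ^ (t+1).choose 2 * q ^ ((a:ℤ)*(t:ℤ)) *
      (N ((a:ℤ)-1) t / D t) with hvdef
  set c : ℕ → K := fun t => (-1:K)^t * p ^ t.choose 2 * q ^ ((t:ℤ) * ((a:ℤ)-1)) *
      (N (a:ℤ) t / D t) with hcdef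
  have hc0 : c 0 = 1 := by simp [hcdef, hNdef, hDdef]
  have hv0 : v 0 = 1 := by simp [hvdef, hNdef, hDdef]
  have hNa : ∀ t : ℕ, N (a:ℤ) (t+1) = N ((a:ℤ)-1) t * ((p*q) ^ (a:ℤ) - q ^ (-(a:ℤ))) := by
    intro t
    simp only [hNdef]
    rw [Finset.prod_range_succ']
    congr 1
    · apply Finset.prod_congr rfl
      intro s _
      have e1 : (a:ℤ) - ((s+1 : ℕ):ℤ) = ((a:ℤ)-1) - (s:ℤ) := by push_cast; ring
      have e2 : ((s+1 : ℕ):ℤ) - (a:ℤ) = (s:ℤ) - ((a:ℤ)-1) := by push_cast; ring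
      rw [e1, e2]
    · norm_num
  have hstep : ∀ t : ℕ, c (t+1) = v (t+1) - v t := by
    intro t
    have hA1 : (p*q) ^ ((t:ℤ)+1) - q ^ (-((t:ℤ)+1)) ≠ 0 := hD t
    have hN2 : N ((a:ℤ)-1) (t+1)
        = N ((a:ℤ)-1) t * ((p*q) ^ (((a:ℤ)-1) - (t:ℤ)) - q ^ ((t:ℤ) - ((a:ℤ)-1))) :=
      Finset.prod_range_succ _ _
    have hD2 : D (t+1) = D t * ((p*q) ^ ((t:ℤ)+1) - q ^ (-((t:ℤ)+1))) :=
      Finset.prod_range_succ _ _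
    have hch : (t+2).choose 2 = (t+1).choose 2 + (t+1) := by
      rw [Nat.choose_succ_succ (t+1) 1, Nat.choose_one_right]; ring
    rw [hcdef, hvdef]
    simp only
    rw [hNa t, hN2, hD2, hch]
    have core := qb_core p q hp hq (a:ℤ) t
    have e3 : (((t+1:ℕ)):ℤ) * ((a:ℤ)-1) = ((t:ℤ)+1)*((a:ℤ)-1) := by push_cast; ring
    have e4 : (a:ℤ) * (((t+1:ℕ)):ℤ) = (a:ℤ) * ((t:ℤ)+1) := by push_cast; ring
    have e5 : ((a:ℤ)-1) - (t:ℤ) = (a:ℤ) - ((t:ℤ)+1) := by ring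
    have e6 : (t:ℤ) - ((a:ℤ)-1) = ((t:ℤ)+1) - (a:ℤ) := by ring
    rw [e3, e4, e5, e6]
    simp only [mul_div_assoc']
    have hDD : D t * ((p*q) ^ ((t:ℤ)+1) - q ^ (-((t:ℤ)+1))) ≠ 0 := mul_ne_zero (hDt t) hA1
    rw [div_sub_div _ _ hDD (hDt t), div_eq_div_iff hDD (mul_ne_zero hDD (hDt t))]
    linear_combination (norm := ring)
      ((D t * ((p*q) ^ ((t:ℤ)+1) - q ^ (-((t:ℤ)+1)))) * D t * (-1:K)^(t+1) *
        p ^ (t+1).choose 2 * N ((a:ℤ)-1) t) * core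
  calc ∑ t ∈ Finset.range (a+1), c t
      = c 0 + ∑ t ∈ Finset.range a, c (t+1) := by
        rw [Finset.sum_range_succ']; ring
    _ = 1 + ∑ t ∈ Finset.range a, (v (t+1) - v t) := by
        rw [hc0]; congr 1; exact Finset.sum_congr rfl fun t _ => hstep t
    _ = 1 + (v a - v 0) := by rw [Finset.sum_range_sub]
    _ = v a := by rw [hv0]; ring
    _ = 0 := by
        have hN0 : N ((a:ℤ)-1) a = 0 := by
          simp only [hNdef]
          apply Finset.prod_eq_zero (i := a-1)
          · exact Finset.mem_range.mpr (by omega)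
          · have e7 : ((a:ℤ)-1) - ((a-1 : ℕ):ℤ) = 0 := by
              have : ((a-1 : ℕ):ℤ) = (a:ℤ) - 1 := by push_cast [ha]; ring
              rw [this]; ring
            have e8 : ((a-1:ℕ):ℤ) - ((a:ℤ)-1) = 0 := by
              have : ((a-1 : ℕ):ℤ) = (a:ℤ) - 1 := by push_cast [ha]; ring
              rw [this]; ring
            rw [e7, e8]
            simp
        rw [hvdef]; simp [hN0]

end AuxFieldLemma

private lemma X_pow_ne (n : ℕ) (hn : n ≠ 0) (c : ℚ) :
    (RatFunc.X : RatFunc ℚ) ^ n ≠ algebraMap (Polynomial ℚ) _ (Polynomial.C c) := by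
  intro h
  rw [← RatFunc.algebraMap_X, ← map_pow] at h
  have h2 := RatFunc.algebraMap_injective ℚ h
  have hdeg := congrArg Polynomial.natDegree h2
  rw [Polynomial.natDegree_X_pow, Polynomial.natDegree_C] at hdeg
  exact hn hdeg

private lemma hD_ratfunc (p : RatFunc ℚ) (hp : p = 1 ∨ p = -1) (s : ℕ) :
    (p * RatFunc.X) ^ ((s:ℤ)+1) - RatFunc.X ^ (-((s:ℤ)+1)) ≠ 0 := by
  intro h
  rw [sub_eq_zero] at h
  have hX : (RatFunc.X : RatFunc ℚ) ≠ 0 := RatFunc.X_ne_zero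
  have hn : ((s:ℤ)+1) = ((s+1:ℕ):ℤ) := by push_cast; ring
  rw [hn, mul_zpow, zpow_neg, zpow_natCast, zpow_natCast] at h
  have h2 : p ^ (s+1) * (RatFunc.X ^ (s+1) * RatFunc.X ^ (s+1)) = 1 := by
    rw [← mul_assoc, h, inv_mul_cancel₀ (pow_ne_zero _ hX)]
  rw [← pow_add] at h2
  have key : ∀ c : ℚ, RatFunc.X ^ ((s+1)+(s+1)) ≠ (RatFunc.C c : RatFunc ℚ) := by
    intro c hc
    exact X_pow_ne ((s+1)+(s+1)) (by omega) c (by rw [hc]; rfl)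
  rcases hp with hp | hp
  · rw [hp, one_pow, one_mul] at h2
    exact key 1 (by rw [h2]; simp)
  · rw [hp] at h2
    rcases Nat.even_or_odd (s+1) with he | ho
    · rw [he.neg_one_pow, one_mul] at h2
      exact key 1 (by rw [h2]; simp)
    · rw [ho.neg_one_pow, neg_one_mul, neg_eq_iff_eq_neg] at h2
      exact key (-1) (by rw [h2]; simp)

/- componentwise projection lemmas for `Aq` -/
private lemma fst_npow (x : Aq) (n : ℕ) : (x ^ n).1 = x.1 ^ n := by
  induction n with
  | zero => rfl
  | succ n ih => rw [pow_succ, pow_succ, Prod.fst_mul, ih]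

private lemma snd_npow (x : Aq) (n : ℕ) : (x ^ n).2 = x.2 ^ n := by
  induction n with
  | zero => rfl
  | succ n ih => rw [pow_succ, pow_succ, Prod.snd_mul, ih]

private lemma fst_zpow (x : Aq) (n : ℤ) : (x ^ n).1 = x.1 ^ n := rfl

private lemma snd_zpow (x : Aq) (n : ℤ) : (x ^ n).2 = x.2 ^ n := rfl

/-- For `a ≥ 1`, `∑_{t=0}^{a} (-1)^t π^{binom(t,2)} q^{t(a-1)} [[a;t]] = 0`. -/
theorem qbinom_alt_sum (a : ℕ) (ha : 1 ≤ a) :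
    ∑ t ∈ Finset.range (a + 1),
      (-1) ^ t * pA ^ t.choose 2 * qA ^ ((t : ℤ) * ((a : ℤ) - 1)) * qbinom (a : ℤ) t = 0 := by
  have hX : (RatFunc.X : RatFunc ℚ) ≠ 0 := RatFunc.X_ne_zero
  have h1 := qb_key (1 : RatFunc ℚ) RatFunc.X one_ne_zero hX
    (hD_ratfunc 1 (Or.inl rfl)) a ha
  have h2 := qb_key (-1 : RatFunc ℚ) RatFunc.X (by norm_num) hX
    (hD_ratfunc (-1) (Or.inr rfl)) a ha
  apply Prod.ext
  · rw [Prod.fst_sum, Prod.fst_zero]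
    rw [← h1]
    apply Finset.sum_congr rfl
    intro t _
    simp only [qbinom, Prod.fst_mul, Prod.fst_div, Prod.fst_prod, fst_npow, fst_zpow,
      Prod.fst_sub, Prod.fst_neg, Prod.fst_one, qA, pA]
  · rw [Prod.snd_sum, Prod.snd_zero]
    rw [← h2]
    apply Finset.sum_congr rfl
    intro t _
    simp only [qbinom, Prod.snd_mul, Prod.snd_div, Prod.snd_prod, snd_npow, snd_zpow,
      Prod.snd_sub, Prod.snd_neg, Prod.snd_one, qA, pA]
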